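/- Let A₁ and A₂ be N×N Hermitian positive definite matrices. Then sup{Tr(Z) : Z an N×N Hermitian positive semidefinite matrix with Tr(A₁ Z) ≤ 1 and Tr(A₂ Z) ≤ 1} equals sup{‖v‖² : v ∈ ℂ^N, v† A₁ v ≤ 1 and v† A₂ v ≤ 1}; that is, the semidefinite relaxation of the quadratically constrained quadratic program with two constraints is tight, and its optimal value is attained by a rank-one feasible matrix Z = v v†. -/

import Mathlib

open scoped ComplexOrder
open Matrix Filter Metric

section Aux

variable {N : ℕ}

lemma herm_im {A : Matrix (Fin N) (Fin N) ℂ} (hA : A.IsHermitian) (x : Fin N → ℂ) :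
    (star x ⬝ᵥ A *ᵥ x).im = 0 := by
  rw [← Complex.conj_eq_iff_im]
  calc (starRingEnd ℂ) (star x ⬝ᵥ A *ᵥ x) = star (star x ⬝ᵥ A *ᵥ x) := rfl
    _ = star (A *ᵥ x) ⬝ᵥ x := by rw [star_dotProduct, star_star]
    _ = star x ⬝ᵥ A *ᵥ x := by rw [star_mulVec, hA.eq, ← dotProduct_mulVec, dotProduct_comm]

lemma psd_of_herm {A : Matrix (Fin N) (Fin N) ℂ} (hA : A.IsHermitian)
    (h : ∀ x : Fin N → ℂ, 0 ≤ (star x ⬝ᵥ A *ᵥ x).re) : A.PosSemidef := by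
  refine Matrix.PosSemidef.of_dotProduct_mulVec_nonneg hA fun x => ?_
  rw [Complex.le_def]
  exact ⟨by simpa using h x, by simpa using (herm_im hA x).symm⟩

lemma tr_psd {A : Matrix (Fin N) (Fin N) ℂ} (hA : A.PosSemidef) : 0 ≤ A.trace.re := by
  have h1 : A.trace.re = ∑ i, (A i i).re := by
    simp [Matrix.trace, Matrix.diag, Complex.re_sum]
  rw [h1]
  refine Finset.sum_nonneg fun i _ => ?_
  have h2 : star (Pi.single i 1) ⬝ᵥ A *ᵥ Pi.single i 1 = A i i := by
    simp [Matrix.mulVec_single, dotProduct, Pi.single_apply, apply_ite]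
  have := hA.re_dotProduct_nonneg (Pi.single i 1)
  rwa [h2] at this

open scoped MatrixOrder in
lemma tr_mul_psd {A Z : Matrix (Fin N) (Fin N) ℂ} (hA : A.PosSemidef) (hZ : Z.PosSemidef) :
    0 ≤ ((A * Z).trace).re := by
  obtain ⟨B, hB⟩ := CStarAlgebra.nonneg_iff_eq_star_mul_self.mp hZ.nonneg
  have h1 : (A * Z).trace = (B * A * Bᴴ).trace := by
    rw [hB, Matrix.star_eq_conjTranspose, ← Matrix.mul_assoc, Matrix.trace_mul_comm, ← Matrix.mul_assoc]
  rw [h1]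
  exact tr_psd (hA.mul_mul_conjTranspose_same B)

lemma vmv_psd (v : Fin N → ℂ) : (Matrix.vecMulVec v (star v)).PosSemidef := by
  have : Matrix.vecMulVec v (star v) = Matrix.replicateCol (Fin 1) v * (Matrix.replicateCol (Fin 1) v)ᴴ := by
    rw [Matrix.conjTranspose_replicateCol]; exact Matrix.vecMulVec_eq (Fin 1) _ _
  rw [this]
  exact Matrix.posSemidef_self_mul_conjTranspose _

lemma tr_mul_vmv (A : Matrix (Fin N) (Fin N) ℂ) (v : Fin N → ℂ) :
    (A * Matrix.vecMulVec v (star v)).trace = star v ⬝ᵥ A *ᵥ v := by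
  simp only [Matrix.trace, Matrix.diag, Matrix.mul_apply, Matrix.vecMulVec_apply,
    dotProduct, Matrix.mulVec, Pi.star_apply, Finset.mul_sum]
  refine Finset.sum_congr rfl fun i _ => Finset.sum_congr rfl fun j _ => by ring

lemma tr_vmv (v : Fin N → ℂ) :
    (Matrix.vecMulVec v (star v)).trace = star v ⬝ᵥ v := by
  simp [Matrix.trace, Matrix.diag, Matrix.vecMulVec_apply, dotProduct, mul_comm]

/-- The quadratic form of a matrix on Euclidean space. -/
noncomputable def qf (A : Matrix (Fin N) (Fin N) ℂ) (v : EuclideanSpace ℂ (Fin N)) : ℝ :=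
  (inner ℂ v (Matrix.toEuclideanLin A v) : ℂ).re

lemma inner_eq_dot (A : Matrix (Fin N) (Fin N) ℂ) (v : EuclideanSpace ℂ (Fin N)) :
    (inner ℂ v (Matrix.toEuclideanLin A v) : ℂ)
      = star ((WithLp.equiv 2 (Fin N → ℂ)) v) ⬝ᵥ A *ᵥ ((WithLp.equiv 2 (Fin N → ℂ)) v) := by
  simp [Matrix.toEuclideanLin_apply, PiLp.inner_apply, dotProduct, Matrix.mulVec,
    RCLike.inner_apply, mul_comm]

lemma qf_eq (A : Matrix (Fin N) (Fin N) ℂ) (v : EuclideanSpace ℂ (Fin N)) :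
    qf A v = (star ((WithLp.equiv 2 (Fin N → ℂ)) v) ⬝ᵥ A *ᵥ ((WithLp.equiv 2 (Fin N → ℂ)) v)).re := by
  unfold qf
  rw [inner_eq_dot]

lemma normsq_eq (v : EuclideanSpace ℂ (Fin N)) :
    (star ((WithLp.equiv 2 (Fin N → ℂ)) v) ⬝ᵥ ((WithLp.equiv 2 (Fin N → ℂ)) v)).re = ‖v‖^2 := by
  rw [← inner_self_eq_norm_sq (𝕜 := ℂ) v]
  simp [PiLp.inner_apply, dotProduct, RCLike.inner_apply, mul_comm, -inner_self_eq_norm_sq_to_K]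

lemma qf_cont (A : Matrix (Fin N) (Fin N) ℂ) : Continuous (qf A) := by
  have hL : Continuous (Matrix.toEuclideanLin (𝕜 := ℂ) A) :=
    LinearMap.continuous_of_finiteDimensional _
  exact Complex.continuous_re.comp (continuous_id.inner hL)

lemma qf_smul (A : Matrix (Fin N) (Fin N) ℂ) (c : ℂ) (v : EuclideanSpace ℂ (Fin N)) :
    qf A (c • v) = ‖c‖^2 * qf A v := by
  unfold qf
  rw [_root_.map_smul, inner_smul_left, inner_smul_right, ← mul_assoc, Complex.conj_mul',
    ← Complex.ofReal_pow, Complex.re_ofReal_mul]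

lemma qf_real_smul (A : Matrix (Fin N) (Fin N) ℂ) (r : ℝ) (v : EuclideanSpace ℂ (Fin N)) :
    qf A ((r : ℂ) • v) = r^2 * qf A v := by
  rw [qf_smul, Complex.norm_real, Real.norm_eq_abs, sq_abs]

lemma qf_matSmul (A : Matrix (Fin N) (Fin N) ℂ) (r : ℝ) (v : EuclideanSpace ℂ (Fin N)) :
    qf ((r : ℂ) • A) v = r * qf A v := by
  unfold qf
  rw [_root_.map_smul, LinearMap.smul_apply, inner_smul_right, Complex.re_ofReal_mul]

lemma qf_matAdd (A B : Matrix (Fin N) (Fin N) ℂ) (v : EuclideanSpace ℂ (Fin N)) :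
    qf (A + B) v = qf A v + qf B v := by
  unfold qf
  rw [map_add, LinearMap.add_apply, inner_add_right, Complex.add_re]

lemma qf_matSub (A B : Matrix (Fin N) (Fin N) ℂ) (v : EuclideanSpace ℂ (Fin N)) :
    qf (A - B) v = qf A v - qf B v := by
  unfold qf
  rw [map_sub, LinearMap.sub_apply, inner_sub_right, Complex.sub_re]

lemma qf_one (v : EuclideanSpace ℂ (Fin N)) : qf (1 : Matrix (Fin N) (Fin N) ℂ) v = ‖v‖^2 := by
  rw [qf_eq, Matrix.one_mulVec, normsq_eq]

lemma qf_zero_vec (A : Matrix (Fin N) (Fin N) ℂ) : qf A (0 : EuclideanSpace ℂ (Fin N)) = 0 := by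
  unfold qf
  simp

lemma qf_pos {A : Matrix (Fin N) (Fin N) ℂ} (hA : A.PosDef) {v : EuclideanSpace ℂ (Fin N)}
    (hv : v ≠ 0) : 0 < qf A v := by
  rw [qf_eq]
  refine hA.re_dotProduct_pos ?_
  intro h
  apply hv
  have := congrArg (WithLp.equiv 2 (Fin N → ℂ)).symm h
  simpa using this

lemma key_extract {X : Type*} [MetricSpace X] {S : Set X} (hSc : IsCompact S)
    {q1 q2 : X → ℝ} (h1 : Continuous q1) (h2 : Continuous q2) (t lam c : ℝ)
    (hmin : ∀ w ∈ S, lam ≤ t * q1 w + (1 - t) * q2 w)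
    (hg : ∀ n : ℕ, ∃ v ∈ S, (t + c/(n+1)) * q1 v + (1 - (t + c/(n+1))) * q2 v ≤ lam) :
    ∃ u ∈ S, (t * q1 u + (1 - t) * q2 u = lam) ∧ c * (q1 u - q2 u) ≤ 0 := by
  choose v hvS hvle using hg
  obtain ⟨D, hD⟩ := hSc.exists_bound_of_continuousOn
    (f := fun x => c * (q1 x - q2 x)) ((continuous_const.mul (h1.sub h2)).continuousOn)
  have hDqf : ∀ x ∈ S, |c * (q1 x - q2 x)| ≤ D := by
    intro x hx; rw [abs_mul]; simpa [Real.norm_eq_abs, abs_mul] using hD x hx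
  have heps : ∀ n : ℕ, (0:ℝ) < 1/((n:ℝ)+1) := by
    intro n; positivity
  have hch : ∀ n : ℕ, c * (q1 (v n) - q2 (v n)) ≤ 0 := by
    intro n
    have h0 := hvle n
    have h1' := hmin (v n) (hvS n)
    have hexp : (t + c/(n+1)) * q1 (v n) + (1 - (t + c/(n+1))) * q2 (v n)
        = (t * q1 (v n) + (1 - t) * q2 (v n)) + (c * (q1 (v n) - q2 (v n))) * (1/((n:ℝ)+1)) := by
      ring
    rw [hexp] at h0
    nlinarith [heps n]
  have hQle : ∀ n : ℕ, t * q1 (v n) + (1 - t) * q2 (v n) ≤ lam + D * (1/((n:ℝ)+1)) := by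
    intro n
    have h0 := hvle n
    have hexp : (t + c/(n+1)) * q1 (v n) + (1 - (t + c/(n+1))) * q2 (v n)
        = (t * q1 (v n) + (1 - t) * q2 (v n)) + (c * (q1 (v n) - q2 (v n))) * (1/((n:ℝ)+1)) := by
      ring
    rw [hexp] at h0
    have habs2 : -(c * (q1 (v n) - q2 (v n))) ≤ D := by
      have := (abs_le.mp (hDqf (v n) (hvS n))).1; linarith
    have := mul_le_mul_of_nonneg_right habs2 (heps n).le
    linarith
  obtain ⟨u, huS, φ, hφ, hconv⟩ := hSc.tendsto_subseq hvS
  have hQcont : Continuous fun x => t * q1 x + (1 - t) * q2 x :=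
    (continuous_const.mul h1).add (continuous_const.mul h2)
  have hQt : Tendsto (fun k => t * q1 (v (φ k)) + (1 - t) * q2 (v (φ k))) atTop
      (nhds (t * q1 u + (1 - t) * q2 u)) := (hQcont.continuousAt.tendsto).comp hconv
  have haux : Tendsto (fun k : ℕ => lam + D * (1/((φ k : ℝ)+1))) atTop (nhds lam) := by
    have : Tendsto (fun k : ℕ => 1/((φ k : ℝ)+1)) atTop (nhds 0) :=
      tendsto_one_div_add_atTop_nhds_zero_nat.comp hφ.tendsto_atTop
    simpa using tendsto_const_nhds.add (tendsto_const_nhds.mul this)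
  have hle1 : t * q1 u + (1 - t) * q2 u ≤ lam :=
    le_of_tendsto_of_tendsto' hQt haux fun k => hQle (φ k)
  have hch' : Tendsto (fun k => c * (q1 (v (φ k)) - q2 (v (φ k)))) atTop
      (nhds (c * (q1 u - q2 u))) :=
    ((continuous_const.mul (h1.sub h2)).continuousAt.tendsto).comp hconv
  exact ⟨u, huS, le_antisymm hle1 (hmin u huS), le_of_tendsto hch'
    (Eventually.of_forall fun k => hch (φ k))⟩

end Aux
set_option maxHeartbeats 1000000 in
/-- Tightness of the semidefinite relaxation of the QCQP with two
constraints: for Hermitian positive definite `A₁, A₂`, the SDP value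
`sup {Tr Z : Z ⪰ 0, Tr(A₁Z) ≤ 1, Tr(A₂Z) ≤ 1}` equals the QCQP value
`sup {‖v‖² : v†A₁v ≤ 1, v†A₂v ≤ 1}`, and the common value is attained by a rank-one
feasible matrix `Z = v v†`. -/
theorem stmt14 {N : ℕ} (A₁ A₂ : Matrix (Fin N) (Fin N) ℂ)
    (hA₁ : A₁.PosDef) (hA₂ : A₂.PosDef) :
    ∃ m : ℝ,
      IsGreatest {t : ℝ | ∃ Z : Matrix (Fin N) (Fin N) ℂ, Z.PosSemidef ∧
        ((A₁ * Z).trace).re ≤ 1 ∧ ((A₂ * Z).trace).re ≤ 1 ∧ t = (Z.trace).re} m ∧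
      IsGreatest {t : ℝ | ∃ v : EuclideanSpace ℂ (Fin N),
        (inner ℂ v (Matrix.toEuclideanLin A₁ v) : ℂ).re ≤ 1 ∧
        (inner ℂ v (Matrix.toEuclideanLin A₂ v) : ℂ).re ≤ 1 ∧ t = ‖v‖ ^ 2} m ∧
      ∃ v : Fin N → ℂ,
        (Matrix.vecMulVec v (star v)).PosSemidef ∧
        ((A₁ * Matrix.vecMulVec v (star v)).trace).re ≤ 1 ∧
        ((A₂ * Matrix.vecMulVec v (star v)).trace).re ≤ 1 ∧
        ((Matrix.vecMulVec v (star v)).trace).re = m := by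
  classical
  rcases Nat.eq_zero_or_pos N with hN | hN
  · -- trivial case N = 0
    subst hN
    refine ⟨0, ⟨⟨0, Matrix.PosSemidef.zero, by simp [Matrix.trace], by simp [Matrix.trace],
        by simp [Matrix.trace]⟩, ?_⟩,
      ⟨⟨0, by simp, by simp, by simp⟩, ?_⟩,
      0, vmv_psd 0, by simp [Matrix.trace], by simp [Matrix.trace], by simp [Matrix.trace]⟩
    · rintro s ⟨Z, _, _, _, rfl⟩
      simp [Matrix.trace]
    · rintro s ⟨v, _, _, rfl⟩
      have hv : v = 0 := Subsingleton.elim v 0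
      simp [hv]
  -- main case
  haveI : Nonempty (Fin N) := ⟨⟨0, hN⟩⟩
  set S : Set (EuclideanSpace ℂ (Fin N)) := sphere 0 1 with hSdef
  have hSc : IsCompact S := isCompact_sphere _ _
  have hmem_sphere : ∀ v : EuclideanSpace ℂ (Fin N), v ∈ S ↔ ‖v‖ = 1 := fun v =>
    mem_sphere_zero_iff_norm
  have hSne : S.Nonempty :=
    ⟨EuclideanSpace.single ⟨0, hN⟩ 1, (hmem_sphere _).mpr (by simp)⟩
  have hQcont : ∀ t : ℝ, Continuous fun v : EuclideanSpace ℂ (Fin N) =>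
      t * qf A₁ v + (1-t) * qf A₂ v := fun t =>
    (continuous_const.mul (qf_cont A₁)).add (continuous_const.mul (qf_cont A₂))
  have hminex : ∀ t : ℝ, ∃ v ∈ S, ∀ w ∈ S,
      t * qf A₁ v + (1-t) * qf A₂ v ≤ t * qf A₁ w + (1-t) * qf A₂ w := by
    intro t
    obtain ⟨v, hvS, hvmin⟩ := hSc.exists_isMinOn hSne (hQcont t).continuousOn
    exact ⟨v, hvS, fun w hw => hvmin hw⟩
  choose vm hvmS hvmmin using hminex
  set g : ℝ → ℝ := fun t => t * qf A₁ (vm t) + (1-t) * qf A₂ (vm t) with hgdef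
  obtain ⟨C, hC⟩ := hSc.exists_bound_of_continuousOn (f := fun v => qf A₁ v - qf A₂ v)
    (((qf_cont A₁).sub (qf_cont A₂)).continuousOn)
  have hC' : ∀ v ∈ S, |qf A₁ v - qf A₂ v| ≤ C := fun v hv => by
    simpa [Real.norm_eq_abs] using hC v hv
  have hC0 : 0 ≤ C := by
    obtain ⟨w₀, hw₀⟩ := hSne
    exact le_trans (abs_nonneg _) (hC' w₀ hw₀)
  have hglip : ∀ s t : ℝ, g t ≤ g s + C * |t - s| := by
    intro s t
    have h1 : g t ≤ t * qf A₁ (vm s) + (1-t) * qf A₂ (vm s) := hvmmin t (vm s) (hvmS s)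
    have h2 : t * qf A₁ (vm s) + (1-t) * qf A₂ (vm s)
        = g s + (t - s) * (qf A₁ (vm s) - qf A₂ (vm s)) := by rw [hgdef]; ring
    have h3 : (t - s) * (qf A₁ (vm s) - qf A₂ (vm s)) ≤ C * |t - s| :=
      calc (t - s) * (qf A₁ (vm s) - qf A₂ (vm s))
          ≤ |(t - s) * (qf A₁ (vm s) - qf A₂ (vm s))| := le_abs_self _
        _ = |t - s| * |qf A₁ (vm s) - qf A₂ (vm s)| := abs_mul _ _
        _ ≤ |t - s| * C := mul_le_mul_of_nonneg_left (hC' _ (hvmS s)) (abs_nonneg _)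
        _ = C * |t - s| := mul_comm _ _
    linarith
  have hgcont : Continuous g := by
    refine (LipschitzWith.of_dist_le_mul (K := ⟨C, hC0⟩) (f := g) ?_).continuous
    intro s t
    rw [Real.dist_eq, Real.dist_eq]
    have e1 := hglip t s
    have e2 := hglip s t
    have e3 : |t - s| = |s - t| := abs_sub_comm t s
    have e2' : g t ≤ g s + C * |s - t| := by rw [← e3]; exact e2
    rw [abs_le]
    constructor
    · change -(C * |s - t|) ≤ g s - g t; linarith
    · change g s - g t ≤ C * |s - t|; linarith
  obtain ⟨t₀, ht₀mem, ht₀max⟩ := isCompact_Icc.exists_isMaxOn (α := ℝ) (s := Set.Icc (0:ℝ) 1)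
    ⟨0, by norm_num⟩ hgcont.continuousOn
  obtain ⟨ht₀0, ht₀1⟩ := ht₀mem
  set lam : ℝ := g t₀ with hlamdef
  have hlam_le : ∀ w ∈ S, lam ≤ t₀ * qf A₁ w + (1-t₀) * qf A₂ w := fun w hw => hvmmin t₀ w hw
  have hgmax : ∀ t ∈ Set.Icc (0:ℝ) 1, g t ≤ lam := fun t ht => ht₀max ht
  have hlam_pos : 0 < lam := by
    have hv := hvmS t₀
    have hvne : vm t₀ ≠ 0 := by
      intro h; rw [hmem_sphere, h] at hv; simp at hv
    have h1 := qf_pos hA₁ hvne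
    have h2 := qf_pos hA₂ hvne
    have hlameq : lam = t₀ * qf A₁ (vm t₀) + (1-t₀) * qf A₂ (vm t₀) := rfl
    rw [hlameq]
    rcases le_total (qf A₁ (vm t₀)) (qf A₂ (vm t₀)) with hab | hab
    · nlinarith [mul_le_mul_of_nonneg_left hab (by linarith : (0:ℝ) ≤ 1 - t₀)]
    · nlinarith [mul_le_mul_of_nonneg_left hab ht₀0]
  have hQ0 : ∀ v : EuclideanSpace ℂ (Fin N),
      lam * ‖v‖^2 ≤ t₀ * qf A₁ v + (1-t₀) * qf A₂ v := by
    intro v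
    rcases eq_or_ne v 0 with rfl | hv
    · simp [qf_zero_vec]
    · have hr : 0 < ‖v‖ := norm_pos_iff.mpr hv
      have hw : ((‖v‖⁻¹ : ℝ) : ℂ) • v ∈ S := by
        rw [hmem_sphere, norm_smul, Complex.norm_real, Real.norm_eq_abs,
          abs_of_pos (inv_pos.mpr hr), inv_mul_cancel₀ hr.ne']
      have hle := hlam_le _ hw
      rw [qf_real_smul, qf_real_smul] at hle
      have h2 : lam ≤ ‖v‖⁻¹^2 * (t₀ * qf A₁ v + (1-t₀) * qf A₂ v) := by linarith [hle]
      have h3 : (0:ℝ) < ‖v‖^2 := by positivity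
      have h4 := mul_le_mul_of_nonneg_right h2 h3.le
      calc lam * ‖v‖^2 ≤ (‖v‖⁻¹^2 * (t₀ * qf A₁ v + (1-t₀) * qf A₂ v)) * ‖v‖^2 := h4
        _ = t₀ * qf A₁ v + (1-t₀) * qf A₂ v := by field_simp
  set Bm : Matrix (Fin N) (Fin N) ℂ := (t₀:ℂ) • A₁ + (((1-t₀):ℝ):ℂ) • A₂ with hBdef
  set Mm : Matrix (Fin N) (Fin N) ℂ := Bm - ((lam:ℝ):ℂ) • 1 with hMdef
  have hqfB : ∀ v, qf Bm v = t₀ * qf A₁ v + (1-t₀) * qf A₂ v := by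
    intro v; rw [hBdef, qf_matAdd, qf_matSmul, qf_matSmul]
  have hqfM : ∀ v, qf Mm v = (t₀ * qf A₁ v + (1-t₀) * qf A₂ v) - lam * ‖v‖^2 := by
    intro v; rw [hMdef, qf_matSub, qf_matSmul, qf_one, hqfB]
  have hBherm : Bm.IsHermitian := by
    simp [hBdef, Matrix.IsHermitian, Matrix.conjTranspose_add, Matrix.conjTranspose_smul,
      Complex.star_def, Complex.conj_ofReal, hA₁.1.eq, hA₂.1.eq]
  have hMherm : Mm.IsHermitian := by
    simp [hMdef, Matrix.IsHermitian, Matrix.conjTranspose_sub, Matrix.conjTranspose_smul,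
      Complex.star_def, Complex.conj_ofReal, hBherm.eq]
  have hMpsd : Mm.PosSemidef := by
    refine psd_of_herm hMherm fun x => ?_
    have h1 : (star x ⬝ᵥ Mm *ᵥ x).re = qf Mm ((WithLp.equiv 2 (Fin N → ℂ)).symm x) := by
      rw [qf_eq, Equiv.apply_symm_apply]
    rw [h1, hqfM]
    linarith [hQ0 ((WithLp.equiv 2 (Fin N → ℂ)).symm x)]
  -- the magic unit vector
  have magic : ∃ u : EuclideanSpace ℂ (Fin N), ‖u‖ = 1 ∧ qf A₁ u ≤ lam ∧ qf A₂ u ≤ lam := by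
    have happ : ∀ c : ℝ, (∀ n : ℕ, t₀ + c/(n+1) ∈ Set.Icc (0:ℝ) 1) →
        ∃ u ∈ S, (t₀ * qf A₁ u + (1-t₀) * qf A₂ u = lam) ∧
          c * (qf A₁ u - qf A₂ u) ≤ 0 := by
      intro c hmemc
      refine key_extract hSc (qf_cont A₁) (qf_cont A₂) t₀ lam c hlam_le fun n => ?_
      exact ⟨vm (t₀ + c/(n+1)), hvmS _, by simpa [hgdef] using hgmax _ (hmemc n)⟩
    have hfracpos : ∀ n : ℕ, (0:ℝ) < 1/((n:ℝ)+1) := fun n => by positivity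
    have hfracle : ∀ n : ℕ, 1/((n:ℝ)+1) ≤ 1 := fun n => by
      rw [div_le_one (by positivity)]
      linarith [Nat.cast_nonneg (α := ℝ) n]
    by_cases h0 : t₀ = 0
    · obtain ⟨u, huS, hQu, hsign⟩ := happ 1 fun n => by
        constructor
        · have := hfracpos n; simp only [one_div]; rw [h0]; positivity
        · rw [h0]; simpa using hfracle n
      rw [h0] at hQu
      simp only [zero_mul, zero_add, sub_zero, one_mul] at hQu
      have hs : qf A₁ u - qf A₂ u ≤ 0 := by linarith [hsign]
      exact ⟨u, (hmem_sphere u).mp huS, by linarith, le_of_eq hQu⟩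
    by_cases h1 : t₀ = 1
    · obtain ⟨u, huS, hQu, hsign⟩ := happ (-1) fun n => by
        have hnd : (-1:ℝ)/((n:ℝ)+1) = -(1/((n:ℝ)+1)) := by ring
        rw [h1, hnd]
        exact ⟨by linarith [hfracle n], by linarith [hfracpos n]⟩
      rw [h1] at hQu
      simp only [one_mul, sub_self, zero_mul, add_zero] at hQu
      have hs : qf A₂ u - qf A₁ u ≤ 0 := by nlinarith [hsign]
      exact ⟨u, (hmem_sphere u).mp huS, le_of_eq hQu, by linarith⟩
    -- interior case
    have h0' : 0 < t₀ := lt_of_le_of_ne ht₀0 (Ne.symm h0)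
    have h1' : t₀ < 1 := lt_of_le_of_ne ht₀1 h1
    set δ : ℝ := min t₀ (1 - t₀) with hδdef
    have hδ : 0 < δ := lt_min h0' (by linarith)
    have hδt : δ ≤ t₀ := min_le_left _ _
    have hδt' : δ ≤ 1 - t₀ := min_le_right _ _
    have hdivle : ∀ n : ℕ, δ/((n:ℝ)+1) ≤ δ := fun n =>
      div_le_self hδ.le (by linarith [Nat.cast_nonneg (α := ℝ) n])
    have hdivpos : ∀ n : ℕ, 0 < δ/((n:ℝ)+1) := fun n => by positivity
    obtain ⟨a, haS, hQa, hsa⟩ := happ δ fun n =>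
      ⟨by linarith [hdivpos n], by linarith [hdivle n]⟩
    obtain ⟨b, hbS, hQb, hsb⟩ := happ (-δ) fun n => by
      have hnd : (-δ)/((n:ℝ)+1) = -(δ/((n:ℝ)+1)) := by ring
      rw [hnd]
      exact ⟨by linarith [hdivle n], by linarith [hdivpos n]⟩
    have hsa' : qf A₁ a ≤ qf A₂ a := by nlinarith [hsa, hδ]
    have hsb' : qf A₂ b ≤ qf A₁ b := by nlinarith [hsb, hδ]
    -- both lie in the kernel of Mm
    have hker : ∀ w, w ∈ S → (t₀ * qf A₁ w + (1-t₀) * qf A₂ w = lam) →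
        w ∈ LinearMap.ker (Matrix.toEuclideanLin Mm) := by
      intro w hwS hwQ
      have hnorm : ‖w‖ = 1 := (hmem_sphere w).mp hwS
      have hq : qf Mm w = 0 := by rw [hqfM, hwQ, hnorm]; ring
      have hdot : star ((WithLp.equiv 2 (Fin N → ℂ)) w) ⬝ᵥ
          Mm *ᵥ ((WithLp.equiv 2 (Fin N → ℂ)) w) = 0 := by
        apply Complex.ext
        · rw [← qf_eq Mm w, hq]
          simp
        · rw [herm_im hMherm]; simp
      have hmv := (hMpsd.dotProduct_mulVec_zero_iff _).mp hdot
      rw [LinearMap.mem_ker, Matrix.toEuclideanLin_apply, show Mm *ᵥ w.ofLp = 0 from hmv]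
      simp
    have hKa := hker a haS hQa
    have hKb := hker b hbS hQb
    have hanorm : ‖a‖ = 1 := (hmem_sphere a).mp haS
    have hbnorm : ‖b‖ = 1 := (hmem_sphere b).mp hbS
    have hane : a ≠ 0 := by intro h; rw [h] at hanorm; simp at hanorm
    -- rank of the kernel over ℝ
    set K : Submodule ℂ (EuclideanSpace ℂ (Fin N)) := LinearMap.ker (Matrix.toEuclideanLin Mm)
      with hKdef
    have hrank : 1 < Module.rank ℝ K := by
      have h1 : 0 < Module.finrank ℂ K := by
        rw [Module.finrank_pos_iff]
        exact ⟨⟨⟨a, hKa⟩, 0, by simp [Subtype.ext_iff, hane]⟩⟩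
      have h2 : Module.finrank ℝ K = 2 * Module.finrank ℂ K := by
        rw [← Complex.finrank_real_complex, Module.finrank_mul_finrank ℝ ℂ K]
      have h3 : 1 < Module.finrank ℝ K := by omega
      rw [← Module.finrank_eq_rank ℝ K]
      exact_mod_cast h3
    -- intermediate value on the connected sphere of K
    have hconn : IsConnected (Subtype.val '' (sphere (0 : K) 1)) :=
      (isConnected_sphere hrank 0 zero_le_one).image _ continuous_subtype_val.continuousOn
    have hma : a ∈ Subtype.val '' (sphere (0 : K) 1) :=
      ⟨⟨a, hKa⟩, by simpa [mem_sphere_iff_norm] using hanorm, rfl⟩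
    have hmb : b ∈ Subtype.val '' (sphere (0 : K) 1) :=
      ⟨⟨b, hKb⟩, by simpa [mem_sphere_iff_norm] using hbnorm, rfl⟩
    obtain ⟨u, huT, hueq⟩ := hconn.isPreconnected.intermediate_value₂ hma hmb
      (qf_cont A₁).continuousOn (qf_cont A₂).continuousOn hsa' hsb'
    obtain ⟨⟨u', hu'K⟩, hus, rfl⟩ := huT
    have hun : ‖u'‖ = 1 := by simpa [mem_sphere_iff_norm] using hus
    -- compute the value
    have humv : Mm *ᵥ (WithLp.equiv 2 (Fin N → ℂ)) u' = 0 := by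
      have h := hu'K
      rw [hKdef, LinearMap.mem_ker, Matrix.toEuclideanLin_apply] at h
      have h2 := congrArg (WithLp.equiv 2 (Fin N → ℂ)) h
      simpa using h2
    have hqMu : qf Mm u' = 0 := by rw [qf_eq, humv]; simp
    have hQu : t₀ * qf A₁ u' + (1-t₀) * qf A₂ u' = lam := by
      have h := hqfM u'
      rw [hqMu, hun, one_pow, mul_one] at h
      linarith
    have hval : qf A₁ u' = lam := by
      rw [← hueq] at hQu
      linarith
    exact ⟨u', hun, le_of_eq hval, le_of_eq (by rw [← hueq]; exact hval)⟩
  obtain ⟨u, hun, hu1, hu2⟩ := magic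
  -- scale to get the optimizer
  set r : ℝ := (Real.sqrt lam)⁻¹ with hrdef
  have hsq : r^2 = lam⁻¹ := by
    rw [hrdef, inv_pow, Real.sq_sqrt hlam_pos.le]
  set vE : EuclideanSpace ℂ (Fin N) := ((r:ℝ):ℂ) • u with hvEdef
  have hqv : ∀ (A : Matrix (Fin N) (Fin N) ℂ), qf A vE = lam⁻¹ * qf A u := by
    intro A; rw [hvEdef, qf_real_smul, hsq]
  have hq1v : qf A₁ vE ≤ 1 := by
    rw [hqv]
    calc lam⁻¹ * qf A₁ u ≤ lam⁻¹ * lam :=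
          mul_le_mul_of_nonneg_left hu1 (inv_nonneg.mpr hlam_pos.le)
      _ = 1 := inv_mul_cancel₀ hlam_pos.ne'
  have hq2v : qf A₂ vE ≤ 1 := by
    rw [hqv]
    calc lam⁻¹ * qf A₂ u ≤ lam⁻¹ * lam :=
          mul_le_mul_of_nonneg_left hu2 (inv_nonneg.mpr hlam_pos.le)
      _ = 1 := inv_mul_cancel₀ hlam_pos.ne'
  have hnv : ‖vE‖^2 = lam⁻¹ := by
    rw [hvEdef, norm_smul, hun, mul_one, Complex.norm_real, Real.norm_eq_abs, sq_abs, hsq]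
  set x : Fin N → ℂ := (WithLp.equiv 2 (Fin N → ℂ)) vE with hxdef
  have hZ1 : ∀ (A : Matrix (Fin N) (Fin N) ℂ),
      ((A * Matrix.vecMulVec x (star x)).trace).re = qf A vE := by
    intro A
    rw [tr_mul_vmv, hxdef]
    exact (qf_eq A vE).symm
  have hZtr : ((Matrix.vecMulVec x (star x)).trace).re = ‖vE‖^2 := by
    rw [tr_vmv, hxdef]
    exact normsq_eq vE
  have hSDPub : ∀ Z : Matrix (Fin N) (Fin N) ℂ, Z.PosSemidef →
      ((A₁ * Z).trace).re ≤ 1 → ((A₂ * Z).trace).re ≤ 1 → (Z.trace).re ≤ lam⁻¹ := by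
    intro Z hZpsd hZ1le hZ2le
    have h0 := tr_mul_psd hMpsd hZpsd
    have hexp : ((Mm * Z).trace).re
        = t₀ * ((A₁ * Z).trace).re + (1-t₀) * ((A₂ * Z).trace).re - lam * (Z.trace).re := by
      rw [hMdef, hBdef, Matrix.sub_mul, Matrix.add_mul, Matrix.smul_mul, Matrix.smul_mul,
        Matrix.smul_mul, Matrix.one_mul, Matrix.trace_sub, Matrix.trace_add,
        Matrix.trace_smul, Matrix.trace_smul, Matrix.trace_smul]
      simp [smul_eq_mul, Complex.sub_re, Complex.add_re, Complex.re_ofReal_mul]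
    have hb1 : t₀ * ((A₁ * Z).trace).re ≤ t₀ * 1 := mul_le_mul_of_nonneg_left hZ1le ht₀0
    have hb2 : (1-t₀) * ((A₂ * Z).trace).re ≤ (1-t₀) * 1 :=
      mul_le_mul_of_nonneg_left hZ2le (by linarith)
    have hlt : lam * (Z.trace).re ≤ 1 := by
      rw [hexp] at h0; linarith
    have h2 : (Z.trace).re * lam ≤ 1 := by linarith [mul_comm lam (Z.trace).re]
    rw [← one_div]
    exact (le_div_iff₀ hlam_pos).mpr h2
  refine ⟨lam⁻¹,
    ⟨⟨Matrix.vecMulVec x (star x), vmv_psd x, by rw [hZ1]; exact hq1v,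
      by rw [hZ1]; exact hq2v, by rw [hZtr, hnv]⟩, ?_⟩,
    ⟨⟨vE, hq1v, hq2v, hnv.symm⟩, ?_⟩,
    x, vmv_psd x, by rw [hZ1]; exact hq1v, by rw [hZ1]; exact hq2v, by rw [hZtr, hnv]⟩
  · rintro s ⟨Z, hZpsd, hZ1le, hZ2le, rfl⟩
    exact hSDPub Z hZpsd hZ1le hZ2le
  · rintro s ⟨w, hw1, hw2, rfl⟩
    have hw1' : qf A₁ w ≤ 1 := hw1
    have hw2' : qf A₂ w ≤ 1 := hw2
    have h := hQ0 w
    have hb1 : t₀ * qf A₁ w ≤ t₀ * 1 := mul_le_mul_of_nonneg_left hw1' ht₀0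
    have hb2 : (1-t₀) * qf A₂ w ≤ (1-t₀) * 1 := mul_le_mul_of_nonneg_left hw2' (by linarith)
    have hlt : lam * ‖w‖^2 ≤ 1 := by linarith
    have h2 : ‖w‖^2 * lam ≤ 1 := by linarith [mul_comm lam (‖w‖^2)]
    rw [← one_div]
    exact (le_div_iff₀ hlam_pos).mpr h2
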